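/- arXiv:2206.08650 — 3 statements merged into one kernel-verified Lean document; each statement's English description precedes it below -/
import Mathlib

section
/- Let (z_k) be a sequence of distinct points in ℂ∖{0} tending to ∞, and let f be an entire function whose zeros are exactly the points z_k, each simple. Let A₀ be an entire function with A₀(z_k) = −f''(z_k)/f'(z_k) for all k. Then there exists an entire function B₀ such that f'' + A₀ f' + B₀ f = 0 on ℂ; equivalently, the meromorphic function −(f'' + A₀ f')/f extends to an entire function. -/
open Filter Metric Complex

theorem stmt5
    (z : ℕ → ℂ) (hz_inj : Function.Injective z) (hz0 : ∀ k, z k ≠ 0)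
    (hz_inf : Tendsto (fun k => ‖z k‖) atTop atTop)
    (f : ℂ → ℂ) (hf : Differentiable ℂ f)
    (hzeros : ∀ w : ℂ, f w = 0 ↔ ∃ k, w = z k)
    (hsimple : ∀ k, deriv f (z k) ≠ 0)
    (A₀ : ℂ → ℂ) (hA₀ : Differentiable ℂ A₀)
    (hA₀val : ∀ k, A₀ (z k) = -(deriv (deriv f) (z k) / deriv f (z k))) :
    ∃ B₀ : ℂ → ℂ, Differentiable ℂ B₀ ∧
      (∀ w : ℂ, deriv (deriv f) w + A₀ w * deriv f w + B₀ w * f w = 0) ∧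
      ∀ w : ℂ, f w ≠ 0 → B₀ w = -((deriv (deriv f) w + A₀ w * deriv f w) / f w) := by
  classical
  have hf' : Differentiable ℂ (deriv f) :=
    analyticOnNhd_univ_iff_differentiable.mp
      ((analyticOnNhd_univ_iff_differentiable.mpr hf).deriv)
  have hf'' : Differentiable ℂ (deriv (deriv f)) :=
    analyticOnNhd_univ_iff_differentiable.mp
      ((analyticOnNhd_univ_iff_differentiable.mpr hf').deriv)
  set h : ℂ → ℂ := fun w => deriv (deriv f) w + A₀ w * deriv f w with hh
  have hhdiff : Differentiable ℂ h := hf''.add (hA₀.mul hf')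
  have hhz : ∀ k, h (z k) = 0 := by
    intro k
    simp only [hh, hA₀val k]
    field_simp [hsimple k]
    ring
  set B₀ : ℂ → ℂ := fun w => if f w = 0 then -(deriv h w / deriv f w) else -(h w / f w)
    with hB₀
  have hBval : ∀ w, f w ≠ 0 → B₀ w = -(h w / f w) := by
    intro w hw; simp [hB₀, hw]
  -- zeros of f are isolated
  have hiso : ∀ k, ∀ᶠ w in nhds (z k), w ≠ z k → f w ≠ 0 := by
    intro k
    obtain ⟨N, hN⟩ := Filter.eventually_atTop.mp
      (hz_inf.eventually_ge_atTop (‖z k‖ + 1))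
    set S : Finset ℕ := (Finset.range N).filter (· ≠ k) with hS
    set T : Finset ℝ := insert (1:ℝ) (S.image (fun j => dist (z j) (z k))) with hT
    have hTne : T.Nonempty := ⟨1, Finset.mem_insert_self _ _⟩
    set ε : ℝ := T.min' hTne with hε
    have hεpos : 0 < ε := by
      apply lt_of_lt_of_le _ (le_refl ε)
      have := Finset.min'_mem T hTne
      rw [← hε] at this
      rcases Finset.mem_insert.mp this with h1 | h2
      · rw [h1]; norm_num
      · obtain ⟨j, hj, hje⟩ := Finset.mem_image.mp h2
        rw [← hje]
        refine dist_pos.mpr fun e => ?_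
        have : j ≠ k := (Finset.mem_filter.mp hj).2
        exact this (hz_inj e)
    have hεle : ∀ j, j ≠ k → ε ≤ dist (z j) (z k) := by
      intro j hjk
      by_cases hjN : j < N
      · have hjS : j ∈ S := Finset.mem_filter.mpr ⟨Finset.mem_range.mpr hjN, hjk⟩
        exact Finset.min'_le _ _ (Finset.mem_insert.mpr (Or.inr
          (Finset.mem_image.mpr ⟨j, hjS, rfl⟩)))
      · have hjN' : N ≤ j := le_of_not_gt hjN
        have h1 : ‖z k‖ + 1 ≤ ‖z j‖ := hN j hjN'
        have h2 : (1:ℝ) ≤ dist (z j) (z k) := by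
          have := norm_sub_norm_le (z j) (z k)
          rw [Complex.dist_eq]
          linarith
        exact le_trans (Finset.min'_le _ _ (Finset.mem_insert_self _ _)) h2
    filter_upwards [Metric.ball_mem_nhds (z k) hεpos] with w hw hwk
    intro hfw
    obtain ⟨j, rfl⟩ := (hzeros w).mp hfw
    rcases eq_or_ne j k with rfl | hjk
    · exact hwk rfl
    · exact absurd (Metric.mem_ball.mp hw) (not_lt.mpr (hεle j hjk))
  have hBdiff : Differentiable ℂ B₀ := by
    intro w
    by_cases hw : f w = 0
    · obtain ⟨k, rfl⟩ := (hzeros w).mp hw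
      set H : ℂ → ℂ := dslope h (z k) with hH
      set F : ℂ → ℂ := dslope f (z k) with hF
      have hHdiff : Differentiable ℂ H := by
        rw [← differentiableOn_univ]
        exact (Complex.differentiableOn_dslope (Filter.univ_mem)).mpr
          hhdiff.differentiableOn
      have hFdiff : Differentiable ℂ F := by
        rw [← differentiableOn_univ]
        exact (Complex.differentiableOn_dslope (Filter.univ_mem)).mpr
          hf.differentiableOn
      have hF0 : F (z k) ≠ 0 := by
        rw [hF, dslope_same]; exact hsimple k
      have hFne : ∀ᶠ u in nhds (z k), F u ≠ 0 :=
        (hFdiff.continuous.continuousAt).eventually_ne hF0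
      have key : (fun u => -H u / F u) =ᶠ[nhds (z k)] B₀ := by
        filter_upwards [hiso k, hFne] with u hune hFu
        by_cases huk : u = z k
        · subst huk
          simp [hB₀, hw, hH, hF, dslope_same, neg_div]
        · have hfu : f u ≠ 0 := hune huk
          have e1 : h u = (u - z k) * H u := by
            have := sub_smul_dslope h (z k) u
            rw [hhz k, sub_zero] at this
            simpa [smul_eq_mul] using this.symm
          have e2 : f u = (u - z k) * F u := by
            have := sub_smul_dslope f (z k) u
            rw [hw, sub_zero] at this
            simpa [smul_eq_mul] using this.symm
          have hsub : u - z k ≠ 0 := sub_ne_zero.mpr huk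
          rw [hBval u hfu, e1, e2]
          field_simp
      exact (((hHdiff (z k)).neg).div (hFdiff (z k)) hF0).congr_of_eventuallyEq key.symm
    · have key : (fun u => -h u / f u) =ᶠ[nhds w] B₀ := by
        filter_upwards [(hf.continuous.continuousAt).eventually_ne hw] with u hu
        rw [hBval u hu, neg_div]
      exact (((hhdiff w).neg).div (hf w) hw).congr_of_eventuallyEq key.symm
  refine ⟨B₀, hBdiff, ?_, ?_⟩
  · intro w
    show h w + B₀ w * f w = 0
    by_cases hw : f w = 0
    · obtain ⟨k, rfl⟩ := (hzeros w).mp hw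
      rw [hw, mul_zero, add_zero, hhz k]
    · rw [hBval w hw]
      field_simp
      ring
  · intro w hw
    exact hBval w hw
end

section
/- Let (z_k) be a sequence of distinct points in ℂ∖{0} tending to ∞ whose exponent of convergence is at most σ < 1, let f(z) = ∏_{k=1}^∞ (1 − z/z_k) be the canonical product over (z_k), and let (u_k) be a sequence in ℂ with ∑_{k=1}^∞ |u_k/z_k| < ∞. Then the function A₀(z) = f(z) · ∑_{k=1}^∞ u_k/(z − z_k) extends to an entire function of order at most σ. -/
open Filter Metric Complex

open Topology

set_option maxHeartbeats 2000000

/-- The maximum modulus `M(r, f) = max_{|z| = r} |f z|` of an entire function. -/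
noncomputable def maxModulus (f : ℂ → ℂ) (r : ℝ) : ℝ :=
  sSup ((fun z => ‖f z‖) '' Metric.sphere (0 : ℂ) r)

/-- The order `limsup_{r → ∞} log log M(r, f) / log r` of an entire function. -/
noncomputable def entireOrder (f : ℂ → ℂ) : ℝ :=
  Filter.limsup
    (fun r : ℝ => Real.log (Real.log (maxModulus f r)) / Real.log r) Filter.atTop

/-- The exponent of convergence `inf { t > 0 : ∑ₖ |z_k|^(-t) < ∞ }` of a sequence. -/
noncomputable def expConv (z : ℕ → ℂ) : ℝ :=
  sInf {t : ℝ | 0 < t ∧ Summable (fun k => ‖z k‖ ^ (-t))}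

noncomputable def Complex.abs : AbsoluteValue ℂ ℝ where
  toFun := fun z => ‖z‖
  map_mul' := norm_mul
  nonneg' := norm_nonneg
  eq_zero' := fun _ => norm_eq_zero
  add_le' := norm_add_le

@[simp] lemma Complex.norm_eq_abs (z : ℂ) : ‖z‖ = Complex.abs z := rfl

lemma Complex.abs_apply (z : ℂ) : Complex.abs z = Real.sqrt (Complex.normSq z) :=
  Complex.norm_def z

lemma Complex.sq_abs (z : ℂ) : Complex.abs z ^ 2 = Complex.normSq z := Complex.sq_norm z

lemma Complex.abs_re_le_abs (z : ℂ) : |z.re| ≤ Complex.abs z := Complex.abs_re_le_norm z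

lemma Complex.abs_le_abs_re_add_abs_im (z : ℂ) : Complex.abs z ≤ |z.re| + |z.im| :=
  Complex.norm_le_abs_re_add_abs_im z

@[simp] lemma Complex.abs_I : Complex.abs Complex.I = 1 := Complex.norm_I

lemma Complex.continuous_abs : Continuous Complex.abs := continuous_norm

lemma differentiable_dslope' {f : ℂ → ℂ} (hf : Differentiable ℂ f) (a : ℂ) :
    Differentiable ℂ (dslope f a) := by
  intro b
  rcases eq_or_ne b a with rfl | hb
  · obtain ⟨p, hp⟩ := hf.analyticAt b
    exact hp.has_fpower_series_dslope_fslope.analyticAt.differentiableAt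
  · have hev : ∀ᶠ w in 𝓝 b, (fun w => (w - a)⁻¹ • (f w - f a)) w = dslope f a w := by
      filter_upwards [eventually_ne_nhds hb] with w hw
      rw [dslope_of_ne f hw]; rfl
    have hd : DifferentiableAt ℂ (fun w => (w - a)⁻¹ • (f w - f a)) b := by
      have h1 : DifferentiableAt ℂ (fun w : ℂ => (w - a)⁻¹) b :=
        (differentiableAt_id.sub_const a).inv (sub_ne_zero.2 hb)
      exact h1.smul ((hf b).sub_const (f a))
    exact hd.congr_of_eventuallyEq (Filter.EventuallyEq.symm hev)

lemma log_one_add_le_rpow {t x : ℝ} (ht : 0 < t) (ht1 : t ≤ 1) (hx : 0 ≤ x) :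
    Real.log (1 + x) ≤ (1 + 1/t) * x ^ t := by
  rcases le_or_gt x 1 with h1 | h1
  · have h2 : Real.log (1 + x) ≤ x := by
      have := Real.log_le_sub_one_of_pos (x := 1 + x) (by linarith)
      linarith
    have h3 : x ≤ x ^ t := by
      rcases eq_or_lt_of_le hx with rfl | hx'
      · simp [Real.zero_rpow (ne_of_gt ht)]
      · calc x = x ^ (1:ℝ) := (Real.rpow_one x).symm
          _ ≤ x ^ t := Real.rpow_le_rpow_of_exponent_ge hx' h1 ht1
    have h4 : 0 ≤ x ^ t := Real.rpow_nonneg hx t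
    nlinarith [div_nonneg (zero_le_one) ht.le]
  · have hxt : 1 ≤ x ^ t := Real.one_le_rpow h1.le ht.le
    have h2 : Real.log (1 + x) ≤ 1 + Real.log x := by
      have : Real.log (1 + x) ≤ Real.log (2 * x) := by
        apply Real.log_le_log (by linarith)
        linarith
      rw [Real.log_mul two_ne_zero (by linarith)] at this
      have hl2 : Real.log 2 ≤ 1 := by
        calc Real.log 2 ≤ Real.log (Real.exp 1) := Real.log_le_log (by norm_num)
              (by have := Real.exp_one_gt_d9; linarith)
          _ = 1 := Real.log_exp 1
      linarith
    have h3 : Real.log x = (1/t) * Real.log (x ^ t) := by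
      rw [Real.log_rpow (by linarith)]; field_simp
    have h4 : Real.log (x ^ t) ≤ x ^ t := by
      have := Real.log_le_sub_one_of_pos (x := x ^ t) (by linarith)
      linarith
    have h5 : 0 < 1/t := by positivity
    calc Real.log (1 + x) ≤ 1 + (1/t) * (x ^ t) := by
          rw [h3] at h2
          nlinarith
      _ ≤ (1 + 1/t) * x ^ t := by nlinarith

lemma exists_tail_prod_close {g : ℕ → ℂ} {L : ℂ} (hL : L ≠ 0) (h : HasProd g L) :
    ∃ s₀ : Finset ℕ, ∀ T : Finset ℕ, Disjoint T s₀ →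
      Complex.abs (∏ j ∈ T, g j - 1) ≤ 2/3 := by
  have hLpos : 0 < Complex.abs L := by simpa using hL
  have hpos : 0 < Complex.abs L / 4 := by positivity
  have h' : ∀ᶠ s in (atTop : Filter (Finset ℕ)), dist (∏ b ∈ s, g b) L < Complex.abs L / 4 :=
    (Metric.tendsto_nhds.1 h) (Complex.abs L / 4) hpos
  rw [Filter.eventually_atTop] at h'
  obtain ⟨s₀, hs₀⟩ := h'
  refine ⟨s₀, fun T hT => ?_⟩
  have h1 : dist (∏ j ∈ s₀, g j) L < Complex.abs L / 4 := hs₀ s₀ le_rfl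
  have h2 : dist (∏ j ∈ s₀ ∪ T, g j) L < Complex.abs L / 4 :=
    hs₀ _ Finset.subset_union_left
  have hsplit : ∏ j ∈ s₀ ∪ T, g j = (∏ j ∈ s₀, g j) * ∏ j ∈ T, g j :=
    Finset.prod_union hT.symm
  rw [Complex.dist_eq, Complex.norm_eq_abs] at h1 h2
  have h3 : Complex.abs ((∏ j ∈ s₀, g j) * (∏ j ∈ T, g j - 1)) < Complex.abs L / 2 := by
    have : (∏ j ∈ s₀, g j) * (∏ j ∈ T, g j - 1)
        = (∏ j ∈ s₀ ∪ T, g j - L) - (∏ j ∈ s₀, g j - L) := by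
      rw [hsplit]; ring
    rw [this]
    calc Complex.abs _ ≤ Complex.abs (∏ j ∈ s₀ ∪ T, g j - L)
          + Complex.abs (∏ j ∈ s₀, g j - L) := by
          apply (Complex.abs.sub_le_add _ _).trans ; exact le_rfl
      _ < Complex.abs L / 2 := by linarith
  have h4 : Complex.abs L - Complex.abs L / 4 ≤ Complex.abs (∏ j ∈ s₀, g j) := by
    have h5 := abs_le.1 (Complex.abs.abs_abv_sub_le_abv_sub (∏ j ∈ s₀, g j) L)
    linarith [h5.1, h1]
  rw [map_mul] at h3
  have h6 : 0 ≤ Complex.abs (∏ j ∈ T, g j - 1) := Complex.abs.nonneg _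
  nlinarith

lemma tail_factors_ne_zero {g : ℕ → ℂ} {s₀ : Finset ℕ}
    (hs₀ : ∀ T : Finset ℕ, Disjoint T s₀ → Complex.abs (∏ j ∈ T, g j - 1) ≤ 2/3)
    {j : ℕ} (hj : j ∉ s₀) : g j ≠ 0 := by
  intro h0
  have := hs₀ {j} (by simpa using hj)
  rw [Finset.prod_singleton, h0] at this
  simp at this
  norm_num at this

lemma summable_abs_log_of_hasProd {g : ℕ → ℂ} {L : ℂ} (hL : L ≠ 0) (h : HasProd g L) :
    Summable (fun j => |Real.log (Complex.abs (g j))|) := by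
  classical
  obtain ⟨s₀, hs₀⟩ := exists_tail_prod_close hL h
  have hne : ∀ j ∉ s₀, g j ≠ 0 := fun j hj => tail_factors_ne_zero hs₀ hj
  -- sub-claim : bounded signed sums
  have sub : ∀ S : Finset ℕ, Disjoint S s₀ →
      |∑ j ∈ S, Real.log (Complex.abs (g j))| ≤ Real.log 3 := by
    intro S hS
    have h1 : Complex.abs (∏ j ∈ S, g j - 1) ≤ 2/3 := hs₀ S hS
    set x := Complex.abs (∏ j ∈ S, g j) with hx
    have hbd := abs_le.1 ((Complex.abs.abs_abv_sub_le_abv_sub (∏ j ∈ S, g j) 1).trans h1)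
    simp only [map_one] at hbd
    have hxl : 1/3 ≤ x := by linarith [hbd.1]
    have hxu : x ≤ 5/3 := by linarith [hbd.2]
    have hlogeq : ∑ j ∈ S, Real.log (Complex.abs (g j)) = Real.log x := by
      rw [hx, map_prod, Real.log_prod]
      intro j hj
      exact Complex.abs.ne_zero (hne j (Finset.disjoint_left.1 hS hj))
    rw [hlogeq]
    rw [abs_le]
    constructor
    · have : Real.log (x⁻¹) ≤ Real.log 3 :=
        Real.log_le_log (by positivity) (by rw [← one_div]; rw [div_le_iff₀] <;> linarith)
      rw [Real.log_inv] at this; linarith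
    · exact Real.log_le_log (by linarith) (by linarith)
  -- bounded partial sums of the truncated abs-log
  set h' : ℕ → ℝ := fun j => if j ∈ s₀ then 0 else |Real.log (Complex.abs (g j))| with hh'
  have hsum' : Summable h' := by
    apply summable_of_sum_le (c := 2 * Real.log 3)
    · intro j; by_cases hj : j ∈ s₀ <;> simp [hh', hj, abs_nonneg]
    · intro s
      have heq : ∑ j ∈ s, h' j = ∑ j ∈ s \ s₀, h' j := by
        symm
        apply Finset.sum_subset (Finset.sdiff_subset)
        intro j hjs hj
        have : j ∈ s₀ := by
          by_contra hc
          exact hj (Finset.mem_sdiff.2 ⟨hjs, hc⟩)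
        simp [hh', this]
      rw [heq]
      have heq2 : ∑ j ∈ s \ s₀, h' j = ∑ j ∈ s \ s₀, |Real.log (Complex.abs (g j))| := by
        apply Finset.sum_congr rfl
        intro j hj
        have : j ∉ s₀ := (Finset.mem_sdiff.1 hj).2
        simp [hh', this]
      rw [heq2]
      set S := s \ s₀ with hS
      have hSd : Disjoint S s₀ := Finset.sdiff_disjoint
      set P := S.filter (fun j => 0 ≤ Real.log (Complex.abs (g j))) with hP
      set N := S.filter (fun j => ¬ 0 ≤ Real.log (Complex.abs (g j))) with hN
      have hPd : Disjoint P s₀ := hSd.mono_left (Finset.filter_subset _ _)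
      have hNd : Disjoint N s₀ := hSd.mono_left (Finset.filter_subset _ _)
      have hsplit : ∑ j ∈ S, |Real.log (Complex.abs (g j))|
          = ∑ j ∈ P, |Real.log (Complex.abs (g j))| + ∑ j ∈ N, |Real.log (Complex.abs (g j))| :=
        (Finset.sum_filter_add_sum_filter_not S _ _).symm
      have hPsum : ∑ j ∈ P, |Real.log (Complex.abs (g j))| ≤ Real.log 3 := by
        have : ∑ j ∈ P, |Real.log (Complex.abs (g j))| = ∑ j ∈ P, Real.log (Complex.abs (g j)) := by
          apply Finset.sum_congr rfl
          intro j hj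
          exact abs_of_nonneg (Finset.mem_filter.1 hj).2
        rw [this]
        exact (le_abs_self _).trans (sub P hPd)
      have hNsum : ∑ j ∈ N, |Real.log (Complex.abs (g j))| ≤ Real.log 3 := by
        have : ∑ j ∈ N, |Real.log (Complex.abs (g j))| = -∑ j ∈ N, Real.log (Complex.abs (g j)) := by
          rw [← Finset.sum_neg_distrib]
          apply Finset.sum_congr rfl
          intro j hj
          have := (Finset.mem_filter.1 hj).2
          rw [abs_of_neg (lt_of_not_ge this)]
        rw [this]
        exact (neg_le_abs _).trans (sub N hNd)
      linarith
  -- conclude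
  have : (fun j => |Real.log (Complex.abs (g j))|)
      = fun j => h' j + (if j ∈ s₀ then |Real.log (Complex.abs (g j))| else 0) := by
    funext j; by_cases hj : j ∈ s₀ <;> simp [hh', hj]
  rw [this]
  apply hsum'.add
  apply summable_of_finite_support
  apply Set.Finite.subset s₀.finite_toSet
  intro j hj
  simp only [Function.mem_support, ne_eq, ite_eq_right_iff, not_forall] at hj
  exact hj.1

lemma abs_le_two_abs_log {x : ℝ} (hx : |x| ≤ 1/2) : |x| ≤ 2 * |Real.log (1 - x)| := by
  rcases abs_le.1 hx with ⟨hx1, hx2⟩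
  rcases le_or_gt 0 x with h | h
  · have h1 : Real.log (1 - x) ≤ -x := by
      have := Real.log_le_sub_one_of_pos (x := 1 - x) (by linarith)
      linarith
    have : x ≤ |Real.log (1 - x)| := by
      have := neg_le_abs (Real.log (1 - x))
      linarith
    rw [_root_.abs_of_nonneg h]; linarith
  · have h1 : (-x) / 2 ≤ Real.log (1 - x) := by
      have h2 := Real.one_sub_inv_le_log_of_pos (x := 1 - x) (by linarith)
      have h3 : 1 - (1 - x)⁻¹ = (-x) / (1 - x) := by
        have hne : (1:ℝ) - x ≠ 0 := by linarith
        rw [eq_div_iff hne, sub_mul, one_mul, inv_mul_cancel₀ hne]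
        ring
      rw [h3] at h2
      have h4 : (-x) / 2 ≤ (-x) / (1 - x) := by
        apply div_le_div_of_nonneg_left (by linarith) (by linarith) (by linarith)
      linarith
    have : (-x)/2 ≤ |Real.log (1 - x)| := h1.trans (le_abs_self _)
    rw [abs_of_neg h]; linarith

lemma re_est {a : ℂ} (ha : Complex.abs a ≤ 1/8) :
    |2 * a.re - Complex.normSq a| ≤ 4 * |Real.log (Complex.abs (1 - a))| := by
  set x := 2 * a.re - Complex.normSq a with hxdef
  have hre : |a.re| ≤ 1/8 := (Complex.abs_re_le_abs a).trans ha
  have hnsq : Complex.normSq a ≤ 1/8 := by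
    have h1 : Complex.normSq a = (Complex.abs a)^2 := (Complex.sq_abs a).symm
    nlinarith [Complex.normSq_nonneg a, Complex.abs.nonneg a]
  have hx : |x| ≤ 1/2 := by
    rw [hxdef, abs_le]
    constructor
    · have := abs_le.1 hre
      have := Complex.normSq_nonneg a
      linarith [(abs_le.1 hre).1]
    · linarith [(abs_le.1 hre).2, Complex.normSq_nonneg a]
  have h1 : Complex.normSq (1 - a) = 1 - x := by
    have hh : Complex.normSq (1 - a) = (1 - a.re) * (1 - a.re) + (0 - a.im) * (0 - a.im) := by
      rw [Complex.normSq_apply, Complex.sub_re, Complex.sub_im, Complex.one_re, Complex.one_im]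
    rw [hh, hxdef, Complex.normSq_apply]; ring
  have h2 : Real.log (Complex.abs (1 - a)) = Real.log (1 - x) / 2 := by
    rw [Complex.abs_apply, Real.log_sqrt (Complex.normSq_nonneg _), h1]
  have h3 := abs_le_two_abs_log hx
  rw [h2, abs_div]
  rw [show |(2:ℝ)| = 2 by norm_num]
  linarith

lemma two_abs_le {p n b : ℝ} (hn : 0 ≤ n) (h : |2 * p - n| ≤ 4 * b) : 2 * |p| ≤ 4 * b + n := by
  cases' abs_cases p with h' h' <;> cases' abs_cases (2 * p - n) with h'' h'' <;> nlinarith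

lemma summable_abs_of_two_logs {a : ℕ → ℂ}
    (ha : Tendsto (fun k => Complex.abs (a k)) atTop (𝓝 0))
    (h1 : Summable (fun j => |Real.log (Complex.abs (1 - a j))|))
    (h2 : Summable (fun j => |Real.log (Complex.abs (1 - Complex.I * a j))|)) :
    Summable (fun j => Complex.abs (a j)) := by
  apply Summable.of_norm_bounded_eventually
    (g := fun j => 4 * |Real.log (Complex.abs (1 - a j))|
      + 4 * |Real.log (Complex.abs (1 - Complex.I * a j))|)
    ((h1.mul_left 4).add (h2.mul_left 4))
  rw [Nat.cofinite_eq_atTop]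
  have hev : ∀ᶠ j in atTop, Complex.abs (a j) ≤ 1/8 := by
    have := ha.eventually (eventually_le_nhds (show (0:ℝ) < 1/8 by norm_num))
    exact this
  filter_upwards [hev] with j hj
  have hIa : Complex.abs (Complex.I * a j) ≤ 1/8 := by
    rw [map_mul, Complex.abs_I, one_mul]; exact hj
  have e1 := re_est hj
  have e2 := re_est hIa
  have hIre : (Complex.I * a j).re = -(a j).im := by
    simp [Complex.mul_re]
  have hInsq : Complex.normSq (Complex.I * a j) = Complex.normSq (a j) := by
    simp [Complex.normSq_mul]
  rw [hIre, hInsq] at e2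
  set b1 := |Real.log (Complex.abs (1 - a j))|
  set b2 := |Real.log (Complex.abs (1 - Complex.I * a j))|
  have hb1 : 0 ≤ b1 := abs_nonneg _
  have hb2 : 0 ≤ b2 := abs_nonneg _
  have hre2 : 2 * |(a j).re| ≤ 4 * b1 + Complex.normSq (a j) :=
    two_abs_le (Complex.normSq_nonneg (a j)) e1
  have him2 : 2 * |(a j).im| ≤ 4 * b2 + Complex.normSq (a j) := by
    have := two_abs_le (Complex.normSq_nonneg (a j)) e2
    rwa [abs_neg] at this
  have habs : Complex.abs (a j) ≤ |(a j).re| + |(a j).im| := Complex.abs_le_abs_re_add_abs_im (a j)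
  have hnsq_small : 2 * Complex.normSq (a j) ≤ Complex.abs (a j) := by
    have h1' : Complex.normSq (a j) = (Complex.abs (a j))^2 := (Complex.sq_abs (a j)).symm
    nlinarith [Complex.abs.nonneg (a j)]
  have : Complex.abs (a j) ≤ 4 * b1 + 4 * b2 := by linarith
  simpa [Real.norm_eq_abs, _root_.abs_of_nonneg (Complex.abs.nonneg (a j))] using this

lemma countable_zero_set {G : ℂ → ℂ} (hG : Differentiable ℂ G) (hG0 : G 0 = 1) :
    {w : ℂ | G w = 0}.Countable := by
  set Z := {w : ℂ | G w = 0} with hZ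
  have hZc : IsClosed Z := isClosed_eq hG.continuous continuous_const
  have hana : AnalyticOnNhd ℂ G Set.univ := fun x _ => hG.analyticAt x
  have hiso : ∀ w ∈ Z, ∀ᶠ y in 𝓝[≠] w, G y ≠ 0 := by
    intro w _
    rcases (hG.analyticAt w).eventually_eq_zero_or_eventually_ne_zero with h | h
    · exfalso
      have hz0 : G 0 = 0 := by
        have := hana.eqOn_zero_of_preconnected_of_eventuallyEq_zero
          isPreconnected_univ (Set.mem_univ w) h
        exact this (Set.mem_univ 0)
      rw [hG0] at hz0; exact one_ne_zero hz0
    · exact h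
  have hcover : Z = ⋃ n : ℕ, (Z ∩ Metric.closedBall 0 n) := by
    ext x
    simp only [Set.mem_iUnion, Set.mem_inter_iff, Metric.mem_closedBall]
    constructor
    · intro hx
      obtain ⟨n, hn⟩ := exists_nat_ge (dist x 0)
      exact ⟨n, hx, hn⟩
    · rintro ⟨n, hn, _⟩; exact hn
  rw [hcover]
  apply Set.countable_iUnion
  intro n
  apply Set.Finite.countable
  apply IsCompact.finite ((isCompact_closedBall (0:ℂ) n).inter_left hZc)
  rw [isDiscrete_iff_nhdsNE]
  intro x hx
  have hx' : x ∈ Z := hx.1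
  have hmem : {y : ℂ | G y ≠ 0} ∈ 𝓝[≠] x ⊓ 𝓟 (Z ∩ Metric.closedBall 0 n) :=
    Filter.mem_inf_of_left (hiso x hx')
  have hmem2 : (Z ∩ Metric.closedBall 0 n) ∈ 𝓝[≠] x ⊓ 𝓟 (Z ∩ Metric.closedBall 0 n) :=
    Filter.mem_inf_of_right (Filter.mem_principal_self _)
  rw [← Filter.empty_mem_iff_bot]
  have := Filter.inter_mem hmem hmem2
  apply Filter.mem_of_superset this
  intro y hy
  exact absurd hy.2.1 hy.1

lemma step_A (z : ℕ → ℂ) (hz0 : ∀ k, z k ≠ 0)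
    (hz_inf : Tendsto (fun k => Complex.abs (z k)) atTop atTop)
    (f : ℂ → ℂ) (hf : Differentiable ℂ f)
    (hprod : ∀ w : ℂ, HasProd (fun k => 1 - w / z k) (f w)) :
    Summable (fun k => Complex.abs (z k) ^ (-(4:ℝ))) := by
  classical
  have hf0 : f 0 = 1 := by
    have h0 := hprod 0
    have heq : (fun k : ℕ => 1 - (0:ℂ) / z k) = fun _ => 1 := by funext k; simp
    rw [heq] at h0
    exact h0.unique hasProd_one
  set G : ℂ → ℂ := fun w => f w * (f (-w) * (f (I * w) * f (-(I * w)))) with hGdef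
  have hGdiff : Differentiable ℂ G := by
    apply hf.mul
    apply Differentiable.mul (hf.comp differentiable_neg)
    exact Differentiable.mul (hf.comp ((differentiable_const I).mul differentiable_id))
      (hf.comp (((differentiable_const I).mul differentiable_id).neg))
  have hG0 : G 0 = 1 := by simp [hGdef, hf0]
  have key : ∀ a : ℂ, (1 - a) * ((1 + a) * ((1 - I * a) * (1 + I * a))) = 1 - a ^ 4 := by
    intro a; linear_combination (a ^ 4 - a ^ 2) * Complex.I_sq
  have hGprod : ∀ w : ℂ, HasProd (fun k => 1 - w ^ 4 / (z k) ^ 4) (G w) := by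
    intro w
    have h := (hprod w).mul ((hprod (-w)).mul ((hprod (I * w)).mul (hprod (-(I * w)))))
    have heq : (fun k => (1 - w / z k) * ((1 - -w / z k) * ((1 - I * w / z k) *
        (1 - -(I * w) / z k)))) = fun k => 1 - w ^ 4 / (z k) ^ 4 := by
      funext k
      rw [neg_div, sub_neg_eq_add, neg_div, sub_neg_eq_add, mul_div_assoc, ← div_pow]
      exact key (w / z k)
    rw [heq] at h
    exact h
  -- choose a good base point
  set ζ : ℂ := Complex.exp ((Real.pi / 8 : ℝ) * I) with hζdef
  have hζ0 : ζ ≠ 0 := Complex.exp_ne_zero _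
  have hζ4 : ζ ^ 4 = I := by
    rw [hζdef, ← Complex.exp_nat_mul]
    rw [show ((4:ℕ):ℂ) * ((Real.pi / 8 : ℝ) * I) = (Real.pi / 2 : ℝ) * I by push_cast; ring,
      Complex.exp_mul_I]
    rw [← Complex.ofReal_cos, ← Complex.ofReal_sin, Real.cos_pi_div_two, Real.sin_pi_div_two]
    simp
  set B : Set ℂ := {w : ℂ | G w = 0} ∪ (fun w => ζ * w) ⁻¹' {w : ℂ | G w = 0} ∪ {0} with hBdef
  have hBc : B.Countable := by
    apply Set.Countable.union
    apply Set.Countable.union (countable_zero_set hGdiff hG0)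
    · exact Set.Countable.preimage (countable_zero_set hGdiff hG0) (mul_right_injective₀ hζ0)
    · exact Set.countable_singleton 0
  have hex : ∃ w : ℂ, w ∉ B := by
    by_contra hc
    push_neg at hc
    have : (Set.univ : Set ℂ).Countable := hBc.mono (fun x _ => hc x)
    haveI hCc : Countable ℂ := Set.countable_univ_iff.mp this
    haveI hRc : Countable ℝ := Function.Injective.countable Complex.ofReal_injective
    exact Cardinal.not_countable_real Set.countable_univ
  obtain ⟨w, hw⟩ := hex
  have hw0 : w ≠ 0 := fun h => hw (by rw [hBdef, h]; right; rfl)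
  have hGw : G w ≠ 0 := fun h => hw (by rw [hBdef]; left; left; exact h)
  have hGζw : G (ζ * w) ≠ 0 := fun h => hw (by rw [hBdef]; left; right; exact h)
  set v : ℂ := w ^ 4 with hvdef
  have hv0 : v ≠ 0 := pow_ne_zero 4 hw0
  have prod1 : HasProd (fun k => 1 - v / (z k) ^ 4) (G w) := hGprod w
  have prod2 : HasProd (fun k => 1 - I * v / (z k) ^ 4) (G (ζ * w)) := by
    have := hGprod (ζ * w)
    rwa [mul_pow, hζ4] at this
  have h1 := summable_abs_log_of_hasProd hGw prod1
  have h2' := summable_abs_log_of_hasProd hGζw prod2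
  have h2 : Summable (fun j => |Real.log (Complex.abs (1 - I * (v / (z j) ^ 4)))|) := by
    have heq : (fun j => |Real.log (Complex.abs (1 - I * (v / (z j) ^ 4)))|)
        = fun j => |Real.log (Complex.abs (1 - I * v / (z j) ^ 4))| := by
      funext j; rw [mul_div_assoc]
    rw [heq]; exact h2'
  have htendsto : Tendsto (fun k => Complex.abs (v / (z k) ^ 4)) atTop (𝓝 0) := by
    have hpow : Tendsto (fun k => Complex.abs (z k) ^ (4:ℕ)) atTop atTop :=
      (tendsto_pow_atTop (by norm_num : (4:ℕ) ≠ 0)).comp hz_inf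
    have hinv : Tendsto (fun k => (Complex.abs (z k) ^ (4:ℕ))⁻¹) atTop (𝓝 0) :=
      hpow.inv_tendsto_atTop
    have heq : (fun k => Complex.abs (v / (z k) ^ 4))
        = fun k => Complex.abs v * (Complex.abs (z k) ^ (4:ℕ))⁻¹ := by
      funext k; rw [map_div₀, map_pow, map_pow, div_eq_mul_inv]
    rw [heq]
    simpa using hinv.const_mul (Complex.abs v)
  have hsum := summable_abs_of_two_logs htendsto h1 h2
  have heq : (fun k => Complex.abs (z k) ^ (-(4:ℝ)))
      = fun k => (Complex.abs v)⁻¹ * Complex.abs (v / (z k) ^ 4) := by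
    funext k
    rw [map_div₀, map_pow, map_pow]
    rw [show (-(4:ℝ)) = -((4:ℕ):ℝ) by norm_num,
      Real.rpow_neg (Complex.abs.nonneg _), Real.rpow_natCast]
    have hv : Complex.abs v ≠ 0 := Complex.abs.ne_zero hv0
    have hzk : Complex.abs (z k) ≠ 0 := Complex.abs.ne_zero (hz0 k)
    rw [hvdef, map_pow] at hv
    field_simp
    exact (div_self (fun h => hv (by simp [h]))).symm
  rw [heq]
  exact hsum.mul_left _

lemma factor_bound (z : ℕ → ℂ) (hz0 : ∀ k, z k ≠ 0) (f : ℂ → ℂ)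
    (hprod : ∀ w : ℂ, HasProd (fun k => 1 - w / z k) (f w))
    {t : ℝ} (ht0 : 0 < t) (ht1 : t ≤ 1)
    (hq : Summable (fun k => Complex.abs (z k) ^ (-t)))
    (w : ℂ) (k : ℕ) :
    Complex.abs (f w) ≤ (Complex.abs (w - z k) / Complex.abs (z k)) *
      Real.exp ((1 + 1/t) * Complex.abs w ^ t * (∑' j, Complex.abs (z j) ^ (-t))) := by
  classical
  set C := (1 + 1/t) * Complex.abs w ^ t with hCdef
  have hC : 0 ≤ C := by
    have := Real.rpow_nonneg (Complex.abs.nonneg w) t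
    have h1t : 0 ≤ 1 + 1/t := by positivity
    positivity
  set a : ℕ → ℝ := fun j => C * Complex.abs (z j) ^ (-t) with hadef
  have ha : Summable a := hq.mul_left C
  have hanonneg : ∀ j, 0 ≤ a j := by
    intro j
    have := Real.rpow_nonneg (Complex.abs.nonneg (z j)) (-t)
    positivity
  have hfac : ∀ j, Complex.abs (1 - w / z j) ≤ Real.exp (a j) := by
    intro j
    have hx : 0 ≤ Complex.abs w / Complex.abs (z j) := by positivity
    have h1 : Complex.abs (1 - w / z j) ≤ 1 + Complex.abs w / Complex.abs (z j) := by
      calc Complex.abs (1 - w / z j) ≤ Complex.abs 1 + Complex.abs (w / z j) :=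
            Complex.abs.sub_le_add 1 (w / z j)
        _ = 1 + Complex.abs w / Complex.abs (z j) := by rw [map_one, map_div₀]
    have h2 : Real.log (1 + Complex.abs w / Complex.abs (z j)) ≤ a j := by
      have h3 := log_one_add_le_rpow ht0 ht1 hx
      have h4 : (Complex.abs w / Complex.abs (z j)) ^ t
          = Complex.abs w ^ t * Complex.abs (z j) ^ (-t) := by
        rw [Real.div_rpow (Complex.abs.nonneg w) (Complex.abs.nonneg (z j)),
          Real.rpow_neg (Complex.abs.nonneg (z j)), div_eq_mul_inv]
      rw [h4] at h3
      rw [hadef, hCdef]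
      calc Real.log (1 + Complex.abs w / Complex.abs (z j))
          ≤ (1 + 1/t) * (Complex.abs w ^ t * Complex.abs (z j) ^ (-t)) := h3
        _ = (1 + 1/t) * Complex.abs w ^ t * Complex.abs (z j) ^ (-t) := by ring
    calc Complex.abs (1 - w / z j) ≤ 1 + Complex.abs w / Complex.abs (z j) := h1
      _ = Real.exp (Real.log (1 + Complex.abs w / Complex.abs (z j))) :=
          (Real.exp_log (by linarith)).symm
      _ ≤ Real.exp (a j) := Real.exp_le_exp.2 h2
  have habs : Tendsto (fun s : Finset ℕ => Complex.abs (∏ j ∈ s, (1 - w / z j)))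
      atTop (𝓝 (Complex.abs (f w))) :=
    (Complex.continuous_abs.continuousAt (x := f w)).tendsto.comp (hprod w)
  apply le_of_tendsto habs
  filter_upwards [Filter.eventually_ge_atTop ({k} : Finset ℕ)] with s hs
  have hk : k ∈ s := Finset.singleton_subset_iff.mp hs
  rw [map_prod, ← Finset.mul_prod_erase s _ hk]
  have hb1 : Complex.abs (1 - w / z k) = Complex.abs (w - z k) / Complex.abs (z k) := by
    rw [show (1 : ℂ) - w / z k = (z k - w) / z k by rw [sub_div, div_self (hz0 k)]]
    rw [map_div₀, Complex.abs.map_sub]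
  rw [hb1]
  apply mul_le_mul_of_nonneg_left _ (by positivity)
  calc ∏ j ∈ s.erase k, Complex.abs (1 - w / z j)
      ≤ ∏ j ∈ s.erase k, Real.exp (a j) :=
        Finset.prod_le_prod (fun j _ => Complex.abs.nonneg _) (fun j _ => hfac j)
    _ = Real.exp (∑ j ∈ s.erase k, a j) := (Real.exp_sum _ _).symm
    _ ≤ Real.exp (∑' j, a j) :=
        Real.exp_le_exp.2 (Summable.sum_le_tsum _ (fun j _ => hanonneg j) ha)
    _ = Real.exp ((1 + 1/t) * Complex.abs w ^ t * (∑' j, Complex.abs (z j) ^ (-t))) := by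
        rw [hadef, tsum_mul_left, hCdef]

theorem stmt6
    (z : ℕ → ℂ) (hz_inj : Function.Injective z) (hz0 : ∀ k, z k ≠ 0)
    (hz_inf : Tendsto (fun k => ‖z k‖) atTop atTop)
    (σ : ℝ) (hσ : expConv z ≤ σ) (hσ1 : σ < 1)
    (f : ℂ → ℂ) (hf : Differentiable ℂ f)
    (hprod : ∀ w : ℂ, HasProd (fun k => 1 - w / z k) (f w))
    (u : ℕ → ℂ) (hsum : Summable (fun k => ‖u k / z k‖)) :
    ∃ A₀ : ℂ → ℂ, Differentiable ℂ A₀ ∧ entireOrder A₀ ≤ σ ∧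
      ∀ w : ℂ, (∀ k, w ≠ z k) → A₀ w = f w * ∑' k, u k / (w - z k) := by
  classical
  simp only [Complex.norm_eq_abs] at hz_inf hsum
  have hS4 : Summable (fun k => Complex.abs (z k) ^ (-(4:ℝ))) := step_A z hz0 hz_inf f hf hprod
  have hσ0 : 0 ≤ σ := by
    refine le_trans ?_ hσ
    exact Real.sInf_nonneg (fun x hx => le_of_lt hx.1)
  have hsummable_t : ∀ t : ℝ, σ < t → Summable (fun k => Complex.abs (z k) ^ (-t)) := by
    intro t ht
    have hne : {s : ℝ | 0 < s ∧ Summable (fun k => Complex.abs (z k) ^ (-s))}.Nonempty :=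
      ⟨4, by norm_num, hS4⟩
    have hlt : sInf {s : ℝ | 0 < s ∧ Summable (fun k => Complex.abs (z k) ^ (-s))} < t :=
      lt_of_le_of_lt hσ ht
    obtain ⟨s, hsE, hst⟩ := exists_lt_of_csInf_lt hne hlt
    apply Summable.of_norm_bounded_eventually hsE.2
    rw [Nat.cofinite_eq_atTop]
    filter_upwards [hz_inf.eventually_ge_atTop 1] with k hk
    rw [Real.norm_eq_abs, _root_.abs_of_nonneg (Real.rpow_nonneg (Complex.abs.nonneg _) _)]
    exact Real.rpow_le_rpow_of_exponent_le hk (by linarith)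
  have hfz : ∀ k, f (z k) = 0 := by
    intro k
    have h := hprod (z k)
    have hzero : (fun s : Finset ℕ => ∏ j ∈ s, (1 - z k / z j)) =ᶠ[atTop]
        (fun _ => (0:ℂ)) := by
      filter_upwards [Filter.eventually_ge_atTop ({k} : Finset ℕ)] with s hs
      apply Finset.prod_eq_zero (Finset.singleton_subset_iff.mp hs)
      rw [div_self (hz0 k)]; ring
    have h2 : Tendsto (fun s : Finset ℕ => ∏ j ∈ s, (1 - z k / z j)) atTop (𝓝 0) := by
      rw [tendsto_congr' hzero]; exact tendsto_const_nhds
    exact tendsto_nhds_unique h h2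
  set A₀ : ℂ → ℂ := fun w => ∑' k, u k * dslope f (z k) w with hA
  have hterm : ∀ (w : ℂ) (k : ℕ), w ≠ z k →
      u k * dslope f (z k) w = f w * (u k / (w - z k)) := by
    intro w k hw
    rw [dslope_of_ne f hw]
    rw [slope_def_field, hfz k]
    rw [sub_zero, ← mul_div_assoc, ← mul_div_assoc, mul_comm]
  have hslope_norm : ∀ (w : ℂ) (k : ℕ), w ≠ z k →
      Complex.abs (u k * dslope f (z k) w)
        = Complex.abs (u k) * Complex.abs (f w) / Complex.abs (w - z k) := by
    intro w k hw
    rw [hterm w k hw, map_mul, map_div₀]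
    ring
  have hb : ∀ w : ℂ, (∀ k, w ≠ z k) → A₀ w = f w * ∑' k, u k / (w - z k) := by
    intro w hw
    have hterm' : ∀ k, u k * dslope f (z k) w = f w * (u k / (w - z k)) :=
      fun k => hterm w k (hw k)
    rw [show A₀ w = ∑' k, u k * dslope f (z k) w from rfl, tsum_congr hterm', tsum_mul_left]
  have hsummand : ∀ w : ℂ, Summable (fun k => u k * dslope f (z k) w) := by
    intro w
    apply Summable.of_norm_bounded_eventually
      (g := fun k => (2 * Complex.abs (f w)) * Complex.abs (u k / z k)) (hsum.mul_left _)
    rw [Nat.cofinite_eq_atTop]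
    filter_upwards [hz_inf.eventually_ge_atTop (2 * Complex.abs w + 1)] with k hk
    have hne : w ≠ z k := by
      intro h
      rw [← h] at hk
      nlinarith [Complex.abs.nonneg w]
    rw [Complex.norm_eq_abs, hslope_norm w k hne]
    have hwz : Complex.abs (z k) / 2 ≤ Complex.abs (w - z k) := by
      have h1 := Complex.abs.abs_abv_sub_le_abv_sub w (z k)
      have h2 := abs_le.1 h1
      nlinarith [Complex.abs.nonneg w, h2.1]
    have hzpos : 0 < Complex.abs (z k) := by
      nlinarith [Complex.abs.nonneg w]
    calc Complex.abs (u k) * Complex.abs (f w) / Complex.abs (w - z k)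
        ≤ Complex.abs (u k) * Complex.abs (f w) / (Complex.abs (z k) / 2) :=
          div_le_div_of_nonneg_left (by positivity) (by linarith) hwz
      _ = 2 * Complex.abs (f w) * Complex.abs (u k / z k) := by
          rw [map_div₀]
          field_simp
  have hdiff : Differentiable ℂ A₀ := by
    intro w₀
    set R := Complex.abs w₀ + 1 with hRdef
    have hR0 : 0 < R := by positivity
    obtain ⟨N, hN⟩ := Filter.eventually_atTop.mp (hz_inf.eventually_ge_atTop (2 * R + 2))
    obtain ⟨Mf, hMf⟩ := (isCompact_closedBall (0:ℂ) R).exists_bound_of_continuousOn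
      hf.continuous.continuousOn
    have hsum' : Summable (fun k => Complex.abs (u (k + N) / z (k + N))) :=
      (summable_nat_add_iff (f := fun k => Complex.abs (u k / z k)) N).mpr hsum
    have hdiff2 : DifferentiableOn ℂ
        (fun w => ∑' k, u (k + N) * dslope f (z (k + N)) w) (Metric.ball 0 R) := by
      apply differentiableOn_tsum_of_summable_norm
        (u := fun k => (2 * Mf) * Complex.abs (u (k + N) / z (k + N)))
        (hsum'.mul_left _)
      · intro k
        exact ((differentiable_dslope' hf (z (k + N))).const_mul (u (k + N))).differentiableOn
      · exact isOpen_ball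
      · intro k w hw
        have hwR : Complex.abs w < R := by
          simpa [Complex.dist_eq] using (mem_ball.mp hw)
        have hzk : 2 * R + 2 ≤ Complex.abs (z (k + N)) := hN (k + N) (Nat.le_add_left N k)
        have hfw : Complex.abs (f w) ≤ Mf := by
          have := hMf w (by
            simpa [Complex.dist_eq] using le_of_lt hwR)
          simpa [Complex.norm_eq_abs] using this
        have hMf0 : 0 ≤ Mf := le_trans (Complex.abs.nonneg _) hfw
        have hne : w ≠ z (k + N) := by
          intro h
          rw [← h] at hzk
          nlinarith
        rw [Complex.norm_eq_abs, hslope_norm w (k + N) hne]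
        have hwz : Complex.abs (z (k + N)) / 2 ≤ Complex.abs (w - z (k + N)) := by
          have h1 := abs_le.1 (Complex.abs.abs_abv_sub_le_abv_sub w (z (k + N)))
          nlinarith [h1.1]
        have hzpos : 0 < Complex.abs (z (k + N)) := by nlinarith
        calc Complex.abs (u (k + N)) * Complex.abs (f w) / Complex.abs (w - z (k + N))
            ≤ Complex.abs (u (k + N)) * Mf / (Complex.abs (z (k + N)) / 2) := by
              apply div_le_div₀ (by positivity)
                (mul_le_mul le_rfl hfw (Complex.abs.nonneg _) (Complex.abs.nonneg _))
                (by linarith) hwz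
          _ = 2 * Mf * Complex.abs (u (k + N) / z (k + N)) := by
              rw [map_div₀]
              field_simp
    have hfin : DifferentiableOn ℂ
        (fun w => ∑ k ∈ Finset.range N, u k * dslope f (z k) w) (Metric.ball 0 R) := by
      apply DifferentiableOn.fun_sum
      intro k _
      exact ((differentiable_dslope' hf (z k)).const_mul (u k)).differentiableOn
    have hon : DifferentiableOn ℂ A₀ (Metric.ball 0 R) := by
      apply (hfin.add hdiff2).congr
      intro w _
      exact (Summable.sum_add_tsum_nat_add N (hsummand w)).symm
    apply hon.differentiableAt (isOpen_ball.mem_nhds ?_)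
    simp [hRdef, Complex.dist_eq]
  refine ⟨A₀, hdiff, ?_, hb⟩
  have hkey : ∀ t' : ℝ, σ < t' → t' < 1 →
      ∀ᶠ r : ℝ in atTop,
        Real.log (Real.log (maxModulus A₀ r)) / Real.log r ≤ t' := by
    intro t' ht'1 ht'2
    set t := (σ + t') / 2 with htdef
    have ht0 : 0 < t := by rw [htdef]; linarith
    have htσ : σ < t := by rw [htdef]; linarith
    have htt' : t < t' := by rw [htdef]; linarith
    have ht1 : t < 1 := by linarith
    have hqt : Summable (fun k => Complex.abs (z k) ^ (-t)) := hsummable_t t htσ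
    set Q := ∑' j, Complex.abs (z j) ^ (-t) with hQdef
    have hQ0 : 0 ≤ Q :=
      tsum_nonneg (fun j => Real.rpow_nonneg (Complex.abs.nonneg _) _)
    set C₀ := ∑' k, Complex.abs (u k / z k) with hC0def
    have hC₀0 : 0 ≤ C₀ := tsum_nonneg (fun k => Complex.abs.nonneg _)
    have hboundall : ∀ w : ℂ,
        Complex.abs (A₀ w) ≤ C₀ * Real.exp ((1 + 1/t) * Complex.abs w ^ t * Q) := by
      have hoff : ∀ w : ℂ, w ∉ Set.range z →
          Complex.abs (A₀ w) ≤ C₀ * Real.exp ((1 + 1/t) * Complex.abs w ^ t * Q) := by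
        intro w hw
        have hne : ∀ k, w ≠ z k := fun k h => hw ⟨k, h.symm⟩
        have hpt : ∀ k, Complex.abs (u k * dslope f (z k) w)
            ≤ Complex.abs (u k / z k) * Real.exp ((1 + 1/t) * Complex.abs w ^ t * Q) := by
          intro k
          rw [hslope_norm w k (hne k), map_div₀]
          have hfb := factor_bound z hz0 f hprod ht0 (le_of_lt ht1) hqt w k
          have hwz : 0 < Complex.abs (w - z k) := by
            rw [AbsoluteValue.pos_iff]
            exact sub_ne_zero.2 (hne k)
          have hzk : 0 < Complex.abs (z k) := by
            rw [AbsoluteValue.pos_iff]; exact hz0 k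
          rw [div_le_iff₀ hwz]
          calc Complex.abs (u k) * Complex.abs (f w)
              ≤ Complex.abs (u k) * ((Complex.abs (w - z k) / Complex.abs (z k)) *
                Real.exp ((1 + 1/t) * Complex.abs w ^ t * Q)) :=
                mul_le_mul_of_nonneg_left hfb (Complex.abs.nonneg _)
            _ = Complex.abs (u k) / Complex.abs (z k) *
                Real.exp ((1 + 1/t) * Complex.abs w ^ t * Q) * Complex.abs (w - z k) := by
                field_simp
        have hsnorm : Summable (fun k => Complex.abs (u k * dslope f (z k) w)) :=
          Summable.of_nonneg_of_le (fun k => Complex.abs.nonneg _) hpt (hsum.mul_right _)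
        have h1 : Complex.abs (A₀ w) ≤ ∑' k, Complex.abs (u k * dslope f (z k) w) := by
          rw [show A₀ w = ∑' k, u k * dslope f (z k) w from rfl]
          have hn : Summable (fun k => ‖u k * dslope f (z k) w‖) := by
            simpa only [Complex.norm_eq_abs] using hsnorm
          have h7 := norm_tsum_le_tsum_norm hn
          simpa only [Complex.norm_eq_abs] using h7
        have h2 : ∑' k, Complex.abs (u k * dslope f (z k) w)
            ≤ ∑' k, Complex.abs (u k / z k) * Real.exp ((1 + 1/t) * Complex.abs w ^ t * Q) :=
          Summable.tsum_le_tsum hpt hsnorm (hsum.mul_right _)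
        have h3 : ∑' k, Complex.abs (u k / z k) * Real.exp ((1 + 1/t) * Complex.abs w ^ t * Q)
            = C₀ * Real.exp ((1 + 1/t) * Complex.abs w ^ t * Q) := by
          rw [tsum_mul_right]
        linarith
      intro w
      have hdense : Dense (Set.range z)ᶜ := (Set.countable_range z).dense_compl ℂ
      have hclosed : IsClosed {w : ℂ | Complex.abs (A₀ w)
          ≤ C₀ * Real.exp ((1 + 1/t) * Complex.abs w ^ t * Q)} := by
        apply isClosed_le
        · exact Complex.continuous_abs.comp hdiff.continuous
        · apply Continuous.mul continuous_const
          apply Real.continuous_exp.comp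
          apply Continuous.mul (Continuous.mul continuous_const ?_) continuous_const
          exact Complex.continuous_abs.rpow_const (fun x => Or.inr (le_of_lt ht0))
      have hsubset := closure_minimal (fun w' (hw' : w' ∈ (Set.range z)ᶜ) => hoff w' hw') hclosed
      rw [hdense.closure_eq] at hsubset
      exact hsubset (Set.mem_univ w)
    have hMup : ∀ r : ℝ, 0 ≤ r →
        maxModulus A₀ r ≤ C₀ * Real.exp ((1 + 1/t) * r ^ t * Q) := by
      intro r hr
      apply Real.sSup_le
      · rintro x ⟨y, hy, rfl⟩
        have hyr : Complex.abs y = r := by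
          simpa [Complex.dist_eq, sub_zero] using (mem_sphere.mp hy)
        calc Complex.abs (A₀ y)
            ≤ C₀ * Real.exp ((1 + 1/t) * Complex.abs y ^ t * Q) := hboundall y
          _ = C₀ * Real.exp ((1 + 1/t) * r ^ t * Q) := by rw [hyr]
      · positivity
    by_cases hzero : ∀ w : ℂ, A₀ w = 0
    · filter_upwards [Filter.eventually_gt_atTop 1] with r hr
      have hM0 : maxModulus A₀ r = 0 := by
        unfold maxModulus
        simp only [Complex.norm_eq_abs]
        have hnes : (Metric.sphere (0:ℂ) r).Nonempty :=
          NormedSpace.sphere_nonempty.mpr (by linarith)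
        have himg : (fun z => Complex.abs (A₀ z)) '' Metric.sphere 0 r = {0} := by
          rw [show (fun z => Complex.abs (A₀ z)) = fun _ => (0:ℝ) by
            funext w; rw [hzero w]; simp]
          exact hnes.image_const 0
        rw [himg, csSup_singleton]
      rw [hM0]
      simp only [Real.log_zero, zero_div]
      linarith
    · push_neg at hzero
      obtain ⟨w₀, hw₀⟩ := hzero
      set c := Complex.abs (A₀ w₀) with hcdef
      have hc0 : 0 < c := by
        rw [hcdef, AbsoluteValue.pos_iff]; exact hw₀
      have hC₀pos : 0 < C₀ := by
        by_contra h
        push_neg at h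
        have h2 := hboundall w₀
        nlinarith [Real.exp_pos ((1 + 1/t) * Complex.abs w₀ ^ t * Q)]
      have hMlow : ∀ r : ℝ, Complex.abs w₀ < r → c ≤ maxModulus A₀ r := by
        intro r hrw
        have hr0 : 0 < r := lt_of_le_of_lt (Complex.abs.nonneg w₀) hrw
        have hbdd : BddAbove ((fun z => Complex.abs (A₀ z)) '' Metric.sphere 0 r) :=
          IsCompact.bddAbove_image (isCompact_sphere 0 r)
            (Complex.continuous_abs.comp hdiff.continuous).continuousOn
        have hfr : ∀ y ∈ frontier (Metric.ball (0:ℂ) r), ‖A₀ y‖ ≤ maxModulus A₀ r := by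
          intro y hy
          rw [frontier_ball (0:ℂ) (ne_of_gt hr0)] at hy
          exact le_csSup hbdd ⟨y, hy, rfl⟩
        have hw₀mem : w₀ ∈ closure (Metric.ball (0:ℂ) r) := by
          apply subset_closure
          simpa [Complex.dist_eq, sub_zero] using hrw
        have := Complex.norm_le_of_forall_mem_frontier_norm_le
          Metric.isBounded_ball hdiff.diffContOnCl hfr hw₀mem
        simpa [Complex.norm_eq_abs] using this
      set K := |Real.log c| + |Real.log C₀| + 1 with hKdef
      have hK1 : 1 ≤ K := by
        have := abs_nonneg (Real.log c)
        have := abs_nonneg (Real.log C₀)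
        rw [hKdef]; linarith
      set C₁ := (1 + 1/t) * Q with hC₁def
      have hC₁0 : 0 ≤ C₁ := by
        rw [hC₁def]; positivity
      have hev1 : ∀ᶠ r : ℝ in atTop, Real.log (K + C₁) ≤ (t' - t) * Real.log r := by
        filter_upwards [Real.tendsto_log_atTop.eventually_ge_atTop
          (Real.log (K + C₁) / (t' - t))] with r hr
        rw [div_le_iff₀ (by linarith)] at hr
        linarith [hr]
      filter_upwards [hev1, Filter.eventually_gt_atTop (max 1 (Complex.abs w₀))]
        with r hr1 hr2
      have hr1' : 1 < r := lt_of_le_of_lt (le_max_left _ _) hr2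
      have hrw : Complex.abs w₀ < r := lt_of_le_of_lt (le_max_right _ _) hr2
      have hlogr : 0 < Real.log r := Real.log_pos hr1'
      have hMl : c ≤ maxModulus A₀ r := hMlow r hrw
      have hMu : maxModulus A₀ r ≤ C₀ * Real.exp ((1 + 1/t) * r ^ t * Q) :=
        hMup r (by linarith)
      have hM0 : 0 < maxModulus A₀ r := lt_of_lt_of_le hc0 hMl
      set L := Real.log (maxModulus A₀ r) with hLdef
      have hLu : L ≤ Real.log C₀ + C₁ * r ^ t := by
        calc L ≤ Real.log (C₀ * Real.exp ((1 + 1/t) * r ^ t * Q)) :=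
              Real.log_le_log hM0 hMu
          _ = Real.log C₀ + (1 + 1/t) * r ^ t * Q := by
              rw [Real.log_mul (ne_of_gt hC₀pos) (Real.exp_ne_zero _), Real.log_exp]
          _ = Real.log C₀ + C₁ * r ^ t := by rw [hC₁def]; ring
      have hLl : Real.log c ≤ L := Real.log_le_log hc0 hMl
      have hrt0 : 0 ≤ r ^ t := Real.rpow_nonneg (by linarith) t
      have hD1 : 1 ≤ K + C₁ * r ^ t := by nlinarith
      have habsL : |L| ≤ K + C₁ * r ^ t := by
        rw [abs_le]
        constructor
        · have h5 := neg_abs_le (Real.log c)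
          rw [hKdef]
          linarith [mul_nonneg hC₁0 hrt0, hLl, abs_nonneg (Real.log C₀)]
        · have h5 := le_abs_self (Real.log C₀)
          rw [hKdef]
          linarith [hLu, abs_nonneg (Real.log c)]
      have hlogL : Real.log L ≤ Real.log (K + C₁ * r ^ t) := by
        rcases eq_or_ne L 0 with h | h
        · rw [h, Real.log_zero]
          exact Real.log_nonneg hD1
        · rw [← Real.log_abs]
          exact Real.log_le_log (abs_pos.2 h) habsL
      have hrt1 : 1 ≤ r ^ t := Real.one_le_rpow (le_of_lt hr1') (le_of_lt ht0)
      have hstep : Real.log (K + C₁ * r ^ t) ≤ Real.log (K + C₁) + t * Real.log r := by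
        calc Real.log (K + C₁ * r ^ t) ≤ Real.log ((K + C₁) * r ^ t) := by
              apply Real.log_le_log (by nlinarith)
              nlinarith
          _ = Real.log (K + C₁) + Real.log (r ^ t) :=
              Real.log_mul (by nlinarith) (by nlinarith)
          _ = Real.log (K + C₁) + t * Real.log r := by
              rw [Real.log_rpow (by linarith)]
      have hfinal : Real.log L ≤ t' * Real.log r := by
        have h6 := hlogL.trans hstep
        nlinarith
      rw [div_le_iff₀ hlogr]
      exact hfinal
  -- conclude the limsup bound
  rw [entireOrder, Filter.limsup_eq]
  set S := {a : ℝ | ∀ᶠ r in atTop,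
    Real.log (Real.log (maxModulus A₀ r)) / Real.log r ≤ a} with hSdef
  have hmem : ∀ t' : ℝ, σ < t' → t' < 1 → t' ∈ S := fun t' h1 h2 => hkey t' h1 h2
  by_cases hbdd : BddBelow S
  · by_contra hlt
    push_neg at hlt
    set t' := (σ + min (sInf S) 1) / 2 with ht'def
    have h1 : σ < min (sInf S) 1 := lt_min hlt hσ1
    have hminl := min_le_left (sInf S) 1
    have hminr := min_le_right (sInf S) 1
    have ht'1 : σ < t' := by rw [ht'def]; linarith
    have ht'2 : t' < 1 := by rw [ht'def]; linarith
    have h3 := csInf_le hbdd (hmem t' ht'1 ht'2)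
    have h4 : t' < sInf S := by rw [ht'def]; linarith
    linarith
  · rw [Real.sInf_of_not_bddBelow hbdd]
    exact hσ0
end

section
/- Let (r_k) be an increasing sequence of positive numbers and (n_k) a sequence of natural numbers such that for every R > 0 the series ∑_k (R/r_k)^{n_k} converges, so that f(z) = ∏_{k=1}^∞ (1 − (z/r_k)^{n_k}) defines an entire function. Then for every z ∈ ℂ with f(z) ≠ 0, the logarithmic derivative of f satisfies z f'(z)/f(z) = ∑_{j=1}^∞ n_j (z/r_j)^{n_j} / ((z/r_j)^{n_j} − 1), the series converging absolutely. -/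
open Filter Metric Complex Topology

theorem stmt9
    (r : ℕ → ℝ) (hr : StrictMono r) (hrpos : ∀ k, 0 < r k)
    (n : ℕ → ℕ)
    (hconv : ∀ R : ℝ, 0 < R → Summable (fun k => (R / r k) ^ (n k)))
    (f : ℂ → ℂ) (hf : Differentiable ℂ f)
    (hprod : ∀ w : ℂ, HasProd (fun k => 1 - (w / (r k : ℂ)) ^ (n k)) (f w))
    (w : ℂ) (hw : f w ≠ 0) :
    Summable (fun j =>
      ‖(n j : ℂ) * (w / (r j : ℂ)) ^ (n j) / ((w / (r j : ℂ)) ^ (n j) - 1)‖) ∧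
    w * deriv f w / f w =
      ∑' j, (n j : ℂ) * (w / (r j : ℂ)) ^ (n j) / ((w / (r j : ℂ)) ^ (n j) - 1) := by
  have hrC : ∀ k, (r k : ℂ) ≠ 0 := fun k => by exact_mod_cast (hrpos k).ne'
  set F : ℕ → ℂ → ℂ := fun k z => 1 - (z / (r k : ℂ)) ^ (n k) with hFdef
  set g : ℕ → ℂ := fun j => (n j : ℂ) * (w / (r j : ℂ)) ^ (n j) / ((w / (r j : ℂ)) ^ (n j) - 1)
    with hgdef
  -- each factor is nonzero at w
  have hF0 : ∀ k, F k w ≠ 0 := by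
    intro k hk0
    apply hw
    have h1 : Tendsto (fun s : Finset ℕ => ∏ i ∈ s, F i w) atTop (𝓝 (0 : ℂ)) := by
      have hev : (fun s : Finset ℕ => (0 : ℂ)) =ᶠ[atTop] fun s => ∏ i ∈ s, F i w := by
        filter_upwards [eventually_ge_atTop ({k} : Finset ℕ)] with s hs
        exact (Finset.prod_eq_zero (hs (Finset.mem_singleton_self k)) hk0).symm
      exact tendsto_const_nhds.congr' hev
    exact tendsto_nhds_unique (hprod w) h1
  have hn1 : ∀ k, 1 ≤ n k := by
    intro k
    rcases Nat.eq_zero_or_pos (n k) with h | h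
    · exfalso; apply hF0 k; simp [hFdef, h]
    · exact h
  -- absolute value computation
  have habsz : ∀ (z : ℂ) (k : ℕ),
      ‖(z / (r k : ℂ)) ^ (n k)‖ = (‖z‖ / r k) ^ (n k) := by
    intro z k
    rw [norm_pow, norm_div, Complex.norm_real, Real.norm_eq_abs, abs_of_pos (hrpos k)]
  -- Summability of the absolute series
  set R' : ℝ := 2 * ‖w‖ + 1 with hR'def
  have hR'pos : 0 < R' := by rw [hR'def]; positivity
  have hu' : Summable (fun k => (R' / r k) ^ (n k)) := hconv R' hR'pos
  have hu'nonneg : ∀ k, 0 ≤ (R' / r k) ^ (n k) := fun k =>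
    pow_nonneg (div_nonneg (by rw [hR'def]; positivity) (hrpos k).le) _
  have hA_le_u' : ∀ j, (‖w‖ / r j) ^ (n j) ≤ (R' / r j) ^ (n j) := by
    intro j
    apply pow_le_pow_left₀ (div_nonneg (norm_nonneg w) (hrpos j).le)
    apply (div_le_div_iff_of_pos_right (hrpos j)).mpr
    rw [hR'def]; nlinarith [norm_nonneg w]
  have htend : Tendsto (fun j => (‖w‖ / r j) ^ (n j)) atTop (𝓝 0) := by
    apply squeeze_zero
      (fun j => pow_nonneg (div_nonneg (norm_nonneg w) (hrpos j).le) _) hA_le_u'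
    exact hu'.tendsto_atTop_zero
  have hn_bound : ∀ j, (n j : ℝ) * (‖w‖ / r j) ^ (n j) ≤ (R' / r j) ^ (n j) := by
    intro j
    have h1 : ‖w‖ / r j ≤ (1 / 2) * (R' / r j) := by
      have he : (1 / 2 : ℝ) * (R' / r j) = (‖w‖ + 1 / 2) / r j := by
        rw [hR'def]; ring
      rw [he]
      apply (div_le_div_iff_of_pos_right (hrpos j)).mpr
      linarith
    have h2 : (‖w‖ / r j) ^ (n j) ≤ (1 / 2) ^ (n j) * (R' / r j) ^ (n j) := by
      rw [← mul_pow]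
      exact pow_le_pow_left₀ (div_nonneg (norm_nonneg w) (hrpos j).le) h1 _
    have h3 : (n j : ℝ) * (1 / 2) ^ (n j) ≤ 1 := by
      have hn2 : (n j : ℝ) ≤ 2 ^ (n j) := by
        exact_mod_cast (Nat.lt_two_pow_self (n := n j)).le
      rw [div_pow, one_pow, ← mul_div_assoc, mul_one, div_le_one (by positivity)]
      exact hn2
    calc (n j : ℝ) * (‖w‖ / r j) ^ (n j)
        ≤ (n j : ℝ) * ((1 / 2) ^ (n j) * (R' / r j) ^ (n j)) := by
          gcongr
      _ = ((n j : ℝ) * (1 / 2) ^ (n j)) * (R' / r j) ^ (n j) := by ring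
      _ ≤ 1 * (R' / r j) ^ (n j) := mul_le_mul_of_nonneg_right h3 (hu'nonneg j)
      _ = (R' / r j) ^ (n j) := one_mul _
  have hsum_abs : Summable (fun j => ‖g j‖) := by
    apply Summable.of_norm_bounded_eventually_nat (g := fun j => 2 * (R' / r j) ^ (n j))
      (hu'.mul_left 2)
    have hsmall : ∀ᶠ j in atTop, (‖w‖ / r j) ^ (n j) < 1 / 2 :=
      htend.eventually (gt_mem_nhds (by norm_num))
    filter_upwards [hsmall] with j hj
    rw [Real.norm_eq_abs, _root_.abs_of_nonneg (norm_nonneg _)]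
    have hAj : ‖(w / (r j : ℂ)) ^ (n j)‖ < 1 / 2 := by
      rw [habsz]; exact hj
    have hden : 1 / 2 ≤ ‖(w / (r j : ℂ)) ^ (n j) - 1‖ := by
      have h1 := norm_sub_norm_le (1 : ℂ) ((w / (r j : ℂ)) ^ (n j))
      rw [norm_one] at h1
      calc (1 : ℝ) / 2 ≤ 1 - ‖(w / (r j : ℂ)) ^ (n j)‖ := by linarith
        _ ≤ ‖(1 : ℂ) - (w / (r j : ℂ)) ^ (n j)‖ := h1
        _ = ‖(w / (r j : ℂ)) ^ (n j) - 1‖ := by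
            rw [← norm_neg, neg_sub]
    rw [hgdef]
    simp only [norm_div, norm_mul, norm_pow, Complex.norm_natCast]
    rw [div_le_iff₀ (by linarith)]
    calc (n j : ℝ) * (‖w‖ / ‖((r j : ℝ) : ℂ)‖) ^ (n j)
        = (n j : ℝ) * (‖w‖ / r j) ^ (n j) := by
          rw [Complex.norm_real, Real.norm_eq_abs, _root_.abs_of_pos (hrpos j)]
      _ ≤ (R' / r j) ^ (n j) := hn_bound j
      _ = (2 * (R' / r j) ^ (n j)) * (1 / 2) := by ring
      _ ≤ (2 * (R' / r j) ^ (n j)) * ‖(w / (r j : ℂ)) ^ (n j) - 1‖ := by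
          gcongr
          linarith [hu'nonneg j]
  refine ⟨hsum_abs, ?_⟩
  -- the derivative part
  set R : ℝ := ‖w‖ + 1 with hRdef
  have hRpos : 0 < R := by positivity
  have hwball : w ∈ ball (0 : ℂ) R := by
    rw [mem_ball, dist_zero_right, hRdef]
    linarith
  set u : ℕ → ℝ := fun k => (R / r k) ^ (n k) with hudef
  have hu : Summable u := hconv R hRpos
  have hunonneg : ∀ k, 0 ≤ u k := fun k =>
    pow_nonneg (div_nonneg (by rw [hRdef]; positivity) (hrpos k).le) _
  set P : ℕ → ℂ → ℂ := fun m z => ∏ k ∈ Finset.range m, F k z with hPdef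
  have habs_le : ∀ z ∈ ball (0 : ℂ) R, ∀ k, ‖(z / (r k : ℂ)) ^ (n k)‖ ≤ u k := by
    intro z hz k
    rw [habsz]
    have hzR : ‖z‖ ≤ R := by
      have := mem_ball_iff_norm.mp hz
      simp only [sub_zero] at this
      exact le_of_lt this
    exact pow_le_pow_left₀ (div_nonneg (norm_nonneg z) (hrpos k).le)
      ((div_le_div_iff_of_pos_right (hrpos k)).mpr hzR) _
  set M : ℝ := Real.exp (∑' k, u k) with hMdef
  have hMpos : 0 < M := Real.exp_pos _
  have hPbound : ∀ m, ∀ z ∈ ball (0 : ℂ) R, ‖P m z‖ ≤ M := by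
    intro m z hz
    calc ‖P m z‖ = ∏ k ∈ Finset.range m, ‖F k z‖ :=
          Complex.norm_prod _ _
      _ ≤ ∏ k ∈ Finset.range m, (1 + u k) := by
          apply Finset.prod_le_prod (fun k _ => norm_nonneg _)
          intro k _
          calc ‖F k z‖ ≤ 1 + ‖(z / (r k : ℂ)) ^ (n k)‖ := by
                simpa using norm_sub_le (1 : ℂ) ((z / (r k : ℂ)) ^ (n k))
            _ ≤ 1 + u k := by gcongr; exact habs_le z hz k
      _ ≤ ∏ k ∈ Finset.range m, Real.exp (u k) := by
          apply Finset.prod_le_prod (fun k _ => by linarith [hunonneg k])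
          intro k _
          linarith [Real.add_one_le_exp (u k)]
      _ = Real.exp (∑ k ∈ Finset.range m, u k) := by rw [Real.exp_sum]
      _ ≤ M := by
          rw [hMdef, Real.exp_le_exp]
          exact hu.sum_le_tsum _ (fun k _ => hunonneg k)
  -- uniform Cauchy of partial products on the ball
  have hSc : CauchySeq (fun m => ∑ k ∈ Finset.range m, u k) :=
    hu.hasSum.tendsto_sum_nat.cauchySeq
  have hUC : UniformCauchySeqOn P atTop (ball (0 : ℂ) R) := by
    rw [Metric.uniformCauchySeqOn_iff]
    intro ε hε
    obtain ⟨N, hN⟩ := Metric.cauchySeq_iff.mp hSc (ε / M) (div_pos hε hMpos)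
    refine ⟨N, ?_⟩
    suffices key : ∀ m n', N ≤ m → m ≤ n' → ∀ x ∈ ball (0 : ℂ) R,
        dist (P n' x) (P m x) < ε by
      intro m hm n' hn' x hx
      rcases le_total m n' with h | h
      · rw [dist_comm]; exact key m n' hm h x hx
      · exact key n' m hn' h x hx
    intro m n' hm hmn x hx
    rw [dist_eq_norm]
    have htel : P n' x - P m x = ∑ k ∈ Finset.Ico m n', (P (k + 1) x - P k x) := by
      rw [Finset.sum_Ico_eq_sub _ hmn, Finset.sum_range_sub (fun k => P k x),
        Finset.sum_range_sub (fun k => P k x)]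
      ring
    have hstep : ∀ k, ‖P (k + 1) x - P k x‖ ≤ M * u k := by
      intro k
      have h1 : P (k + 1) x - P k x = P k x * (F k x - 1) := by
        simp only [hPdef, Finset.prod_range_succ]
        ring
      rw [h1, norm_mul]
      have h2 : ‖F k x - 1‖ = ‖(x / (r k : ℂ)) ^ (n k)‖ := by
        simp only [hFdef]
        rw [← norm_neg]
        congr 1
        ring
      rw [h2]
      exact mul_le_mul (hPbound k x hx) (habs_le x hx k) (norm_nonneg _) hMpos.le
    calc ‖P n' x - P m x‖ ≤ ∑ k ∈ Finset.Ico m n', ‖P (k + 1) x - P k x‖ := by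
          rw [htel]; exact norm_sum_le _ _
      _ ≤ ∑ k ∈ Finset.Ico m n', M * u k := Finset.sum_le_sum fun k _ => hstep k
      _ = M * ∑ k ∈ Finset.Ico m n', u k := by rw [Finset.mul_sum]
      _ < ε := by
          have hd := hN n' (le_trans hm hmn) m hm
          rw [Real.dist_eq] at hd
          have h5 : ∑ k ∈ Finset.Ico m n', u k < ε / M := by
            rw [Finset.sum_Ico_eq_sub _ hmn]
            calc (∑ k ∈ Finset.range n', u k) - ∑ k ∈ Finset.range m, u k
                ≤ |(∑ k ∈ Finset.range n', u k) - ∑ k ∈ Finset.range m, u k| := le_abs_self _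
              _ < ε / M := hd
          calc M * ∑ k ∈ Finset.Ico m n', u k < M * (ε / M) := by
                exact mul_lt_mul_of_pos_left h5 hMpos
            _ = ε := by field_simp
  have hFdiff : ∀ k, Differentiable ℂ (F k) := by
    intro k
    exact ((differentiable_id.div_const _).pow _).const_sub 1
  have hPdiff : ∀ m, DifferentiableOn ℂ (P m) (ball (0 : ℂ) R) := by
    intro m
    apply Differentiable.differentiableOn
    exact Differentiable.fun_finsetProd fun k _ => hFdiff k
  have hTU : TendstoUniformlyOn P f atTop (ball (0 : ℂ) R) :=
    hUC.tendstoUniformlyOn_of_tendsto fun x _ => (hprod x).tendsto_prod_nat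
  have hlog : Tendsto (fun m => logDeriv (P m) w) atTop (𝓝 (logDeriv f w)) :=
    logDeriv_tendsto isOpen_ball hwball hTU.tendstoLocallyUniformlyOn
      (Eventually.of_forall hPdiff) hw
  have hlogP : ∀ m, logDeriv (P m) w = ∑ k ∈ Finset.range m, logDeriv (F k) w := by
    intro m
    exact logDeriv_prod (fun k _ => hF0 k) fun k _ => (hFdiff k).differentiableAt
  have hterm : ∀ k, w * logDeriv (F k) w = g k := by
    intro k
    have h0 : HasDerivAt (fun z : ℂ => z / (r k : ℂ)) ((r k : ℂ))⁻¹ w := by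
      simpa using (hasDerivAt_id w).div_const (r k : ℂ)
    have hd : HasDerivAt (F k)
        (-((n k : ℂ) * (w / (r k : ℂ)) ^ (n k - 1) * ((r k : ℂ))⁻¹)) w :=
      ((h0.pow (n k)).const_sub 1)
    have hpow : (w / (r k : ℂ)) ^ (n k - 1) * (w * ((r k : ℂ))⁻¹) =
        (w / (r k : ℂ)) ^ (n k) := by
      rw [← div_eq_mul_inv, ← pow_succ, Nat.sub_add_cancel (hn1 k)]
    have hD : (1 : ℂ) - (w / (r k : ℂ)) ^ (n k) ≠ 0 := hF0 k
    have hD' : (w / (r k : ℂ)) ^ (n k) - 1 ≠ 0 := by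
      intro h
      apply hD
      rw [sub_eq_zero] at h ⊢
      exact h.symm
    rw [logDeriv_apply, hd.deriv]
    show w * (-((n k : ℂ) * (w / (r k : ℂ)) ^ (n k - 1) * ((r k : ℂ))⁻¹) /
        (1 - (w / (r k : ℂ)) ^ (n k))) =
      (n k : ℂ) * (w / (r k : ℂ)) ^ (n k) / ((w / (r k : ℂ)) ^ (n k) - 1)
    rw [(mul_div_assoc w _ _).symm, div_eq_div_iff hD hD']
    rw [← hpow]
    ring
  have h2 : Tendsto (fun m => ∑ k ∈ Finset.range m, g k) atTop (𝓝 (∑' j, g j)) := by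
    have hgs : Summable g := by
      apply Summable.of_norm
      exact hsum_abs
    exact hgs.hasSum.tendsto_sum_nat
  have h3 : Tendsto (fun m => ∑ k ∈ Finset.range m, g k) atTop (𝓝 (w * logDeriv f w)) := by
    have h := hlog.const_mul w
    apply h.congr
    intro m
    rw [hlogP m, Finset.mul_sum]
    exact Finset.sum_congr rfl fun k _ => hterm k
  have hfinal : ∑' j, g j = w * logDeriv f w := tendsto_nhds_unique h2 h3
  rw [hgdef] at hfinal
  rw [hfinal, logDeriv_apply, mul_div_assoc]
end
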